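/- For a continuous map f on a compact metric space, h_L^+(f) = lim_{ε→0} inf{h_L^+(f,U) : U a finite open cover with diam(U) < ε}, and the same holds for h_L^-. -/

import Mathlib

open Set Filter Topology Metric
open scoped ENNReal

/-- `U` is an open cover of `X`: a family of open sets whose union is `X`. -/
def IsOpenCover {X : Type*} [MetricSpace X] (U : Set (Set X)) : Prop :=
  (∀ A ∈ U, IsOpen A) ∧ ⋃₀ U = Set.univ

/-- The Lebesgue number of a cover `U`: the largest `δ` such that every open
ball of radius `δ` is contained in some element of `U`. -/
noncomputable def leb {X : Type*} [MetricSpace X] (U : Set (Set X)) : ℝ≥0∞ :=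
  sSup {δ : ℝ≥0∞ | ∀ x : X, ∃ A ∈ U, EMetric.ball x δ ⊆ A}

/-- The cover `{g⁻¹(A) : A ∈ U}`. -/
def preCov {X : Type*} (g : X → X) (U : Set (Set X)) : Set (Set X) :=
  (fun A => g ⁻¹' A) '' U

/-- The join `U ∨ V = {A ∩ B : A ∈ U, B ∈ V}` of two covers. -/
def covJoin {X : Type*} (U V : Set (Set X)) : Set (Set X) :=
  {S | ∃ A ∈ U, ∃ B ∈ V, S = A ∩ B}

/-- The cover `U_f^n = ⋁_{k=0}^{n-1} f^{-k}(U)`. -/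
def covSeq {X : Type*} (f : X → X) (U : Set (Set X)) (n : ℕ) : Set (Set X) :=
  {S | ∃ g : Fin n → Set X, (∀ k, g k ∈ U) ∧ S = ⋂ k : Fin n, (f^[(k : ℕ)]) ⁻¹' g k}

/-- `δ_n(f,U)`, the Lebesgue number of `U_f^n`. -/
noncomputable def lebN {X : Type*} [MetricSpace X] (f : X → X) (U : Set (Set X)) (n : ℕ) : ℝ≥0∞ :=
  leb (covSeq f U n)

/-- `h_L^+(f,U) = limsup_n -(1/n) log δ_n(f,U)`. -/
noncomputable def hLplus {X : Type*} [MetricSpace X] (f : X → X) (U : Set (Set X)) : EReal :=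
  Filter.limsup (fun n : ℕ => ((-Real.log ((lebN f U n).toReal) / n : ℝ) : EReal)) atTop

/-- `h_L^-(f,U) = liminf_n -(1/n) log δ_n(f,U)`. -/
noncomputable def hLminus {X : Type*} [MetricSpace X] (f : X → X) (U : Set (Set X)) : EReal :=
  Filter.liminf (fun n : ℕ => ((-Real.log ((lebN f U n).toReal) / n : ℝ) : EReal)) atTop

/-- `h_L^+(f)`: supremum over finite open covers. -/
noncomputable def hLplusSup {X : Type*} [MetricSpace X] (f : X → X) : EReal :=
  ⨆ (U : Set (Set X)) (_ : IsOpenCover U ∧ U.Finite), hLplus f U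

/-- `h_L^-(f)`: supremum over finite open covers. -/
noncomputable def hLminusSup {X : Type*} [MetricSpace X] (f : X → X) : EReal :=
  ⨆ (U : Set (Set X)) (_ : IsOpenCover U ∧ U.Finite), hLminus f U

/-- The diameter of a cover: supremum of diameters of its elements. -/
noncomputable def covDiam {X : Type*} [MetricSpace X] (U : Set (Set X)) : ℝ≥0∞ :=
  ⨆ A ∈ U, EMetric.diam A

/-- `U` refines `V`: every element of `U` is contained in some element of `V`. -/
def Refines {X : Type*} (U V : Set (Set X)) : Prop :=
  ∀ A ∈ U, ∃ B ∈ V, A ⊆ B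

/-- `N(γ)`: the minimal number of open `γ`-balls needed to cover `X`. -/
noncomputable def covN (X : Type*) [MetricSpace X] (γ : ℝ≥0∞) : ℕ :=
  sInf {n : ℕ | ∃ s : Finset X, s.card = n ∧ ⋃ x ∈ s, EMetric.ball x γ = Set.univ}

/-- `S(U)`: the smallest cardinality of a subcover of `U`. -/
noncomputable def covS {X : Type*} [MetricSpace X] (U : Set (Set X)) : ℕ :=
  sInf {m : ℕ | ∃ W ⊆ U, ⋃₀ W = Set.univ ∧ W.ncard = m}

/-- `s_n(f,ε)`: maximal cardinality of an `(n,ε)`-separated set. -/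
noncomputable def sep {X : Type*} [MetricSpace X] (f : X → X) (n : ℕ) (ε : ℝ) : ℕ :=
  sSup {m : ℕ | ∃ E : Finset X, E.card = m ∧
    ∀ x ∈ E, ∀ y ∈ E, x ≠ y → ∃ k < n, ε < dist (f^[k] x) (f^[k] y)}

/-- Topological entropy via `(n,ε)`-separated sets. -/
noncomputable def topEnt {X : Type*} [MetricSpace X] (f : X → X) : EReal :=
  ⨆ (ε : ℝ) (_ : 0 < ε),
    Filter.limsup (fun n : ℕ => ((Real.log (sep f n ε) / n : ℝ) : EReal)) atTop

/-- Upper box dimension of `X`. -/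
noncomputable def dimB (X : Type*) [MetricSpace X] : EReal :=
  Filter.limsup
    (fun γ : ℝ => ((Real.log (covN X (ENNReal.ofReal γ)) / -Real.log γ : ℝ) : EReal))
    (nhdsWithin (0:ℝ) (Set.Ioi 0))
section Aux

variable {X : Type*} [MetricSpace X]

/-- The `n`-th term in the definition of `hLplus`/`hLminus`. -/
noncomputable def hTerm (f : X → X) (U : Set (Set X)) (n : ℕ) : ℝ :=
  -Real.log ((lebN f U n).toReal) / n

lemma hLplus_def (f : X → X) (U : Set (Set X)) :
    hLplus f U = Filter.limsup (fun n : ℕ => ((hTerm f U n : ℝ) : EReal)) atTop := rfl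

lemma hLminus_def (f : X → X) (U : Set (Set X)) :
    hLminus f U = Filter.liminf (fun n : ℕ => ((hTerm f U n : ℝ) : EReal)) atTop := rfl

lemma leb_pos [CompactSpace X] {U : Set (Set X)} (h : IsOpenCover U) : 0 < leb U := by
  obtain ⟨δ, hδ, hball⟩ := lebesgue_number_lemma_of_metric_sUnion isCompact_univ h.1
    (by rw [h.2])
  refine lt_of_lt_of_le (ENNReal.ofReal_pos.2 hδ) (le_sSup ?_)
  intro x
  obtain ⟨t, ht, hsub⟩ := hball x (mem_univ x)
  exact ⟨t, ht, fun y hy => hsub (Metric.mem_ball.2 (edist_lt_ofReal.1 (EMetric.mem_ball.1 hy)))⟩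

lemma covSeq_isOpenCover {f : X → X} (hf : Continuous f) {U : Set (Set X)}
    (h : IsOpenCover U) (n : ℕ) : IsOpenCover (covSeq f U n) := by
  constructor
  · rintro A ⟨g, hg, rfl⟩
    exact isOpen_iInter_of_finite fun k => (h.1 _ (hg k)).preimage (hf.iterate _)
  · rw [eq_univ_iff_forall]
    intro x
    have hmem : ∀ k : Fin n, ∃ A ∈ U, f^[(k : ℕ)] x ∈ A := by
      intro k
      have : f^[(k : ℕ)] x ∈ ⋃₀ U := h.2.symm ▸ mem_univ _
      exact this
    choose g hg1 hg2 using hmem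
    exact ⟨_, ⟨g, hg1, rfl⟩, by simpa [mem_iInter] using hg2⟩

lemma leb_mono {U V : Set (Set X)} (h : Refines U V) : leb U ≤ leb V := by
  apply sSup_le_sSup
  intro δ hδ x
  obtain ⟨A, hA, hb⟩ := hδ x
  obtain ⟨B, hB, hAB⟩ := h A hA
  exact ⟨B, hB, hb.trans hAB⟩

lemma covSeq_refines {f : X → X} {U V : Set (Set X)} (h : Refines U V) (n : ℕ) :
    Refines (covSeq f U n) (covSeq f V n) := by
  rintro A ⟨g, hg, rfl⟩
  choose r hr1 hr2 using h
  exact ⟨⋂ k : Fin n, f^[(k : ℕ)] ⁻¹' (r (g k) (hg k)),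
    ⟨fun k => r (g k) (hg k), fun k => hr1 _ _, rfl⟩,
    iInter_mono fun k => preimage_mono (hr2 _ _)⟩

lemma covSeq_refines_one {f : X → X} {U : Set (Set X)} {n : ℕ} (hn : 1 ≤ n) :
    Refines (covSeq f U n) (covSeq f U 1) := by
  rintro A ⟨g, hg, rfl⟩
  refine ⟨⋂ k : Fin 1, f^[(k : ℕ)] ⁻¹' (g ⟨0, hn⟩),
    ⟨fun _ => g ⟨0, hn⟩, fun _ => hg _, rfl⟩, ?_⟩
  intro x hx
  simp only [mem_iInter] at hx ⊢
  intro k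
  have hk : (k : ℕ) = 0 := by omega
  rw [hk]
  simpa using hx ⟨0, hn⟩

lemma univ_mem_covSeq {f : X → X} {U : Set (Set X)} (h : univ ∈ U) (n : ℕ) :
    univ ∈ covSeq f U n :=
  ⟨fun _ => univ, fun _ => h, by simp⟩

lemma leb_eq_top_of_univ_mem {W : Set (Set X)} (h : univ ∈ W) : leb W = ⊤ :=
  top_unique (le_sSup fun _ => ⟨univ, h, subset_univ _⟩)

lemma univ_mem_of_leb_eq_top [CompactSpace X] [Nonempty X] {W : Set (Set X)}
    (h : leb W = ⊤) : univ ∈ W := by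
  have hd : EMetric.diam (univ : Set X) ≠ ⊤ := isCompact_univ.isBounded.ediam_ne_top
  have hlt : EMetric.diam (univ : Set X) < leb W := h ▸ lt_top_iff_ne_top.2 hd
  obtain ⟨δ, hδW, hδ⟩ := lt_sSup_iff.1 hlt
  obtain ⟨A, hA, hball⟩ := hδW (Classical.arbitrary X)
  have hsub : univ ⊆ A := fun y _ => hball
    (EMetric.mem_ball.2 (lt_of_le_of_lt (EMetric.edist_le_diam_of_mem (mem_univ _) (mem_univ _)) hδ))
  exact subset_antisymm (subset_univ A) hsub ▸ hA

lemma univ_mem_of_univ_mem_covSeq {f : X → X} {U : Set (Set X)} {n : ℕ} (hn : 1 ≤ n)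
    (h : univ ∈ covSeq f U n) : univ ∈ U := by
  obtain ⟨g, hg, hU⟩ := h
  have hsub : univ ⊆ g ⟨0, hn⟩ := by
    intro x hx
    have hx2 : x ∈ ⋂ k : Fin n, f^[(k : ℕ)] ⁻¹' g k := hU ▸ hx
    simpa using mem_iInter.1 hx2 ⟨0, hn⟩
  exact subset_antisymm (subset_univ _) hsub ▸ hg ⟨0, hn⟩

lemma leb_eq_top_of_isEmpty [IsEmpty X] (W : Set (Set X)) : leb W = ⊤ :=
  top_unique (le_sSup fun x => (IsEmpty.false x).elim)

lemma hTerm_eq_zero_of_isEmpty [IsEmpty X] (f : X → X) (U : Set (Set X)) (n : ℕ) :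
    hTerm f U n = 0 := by
  rw [hTerm, lebN, leb_eq_top_of_isEmpty]
  simp

lemma hLplus_eq_zero_of_isEmpty [IsEmpty X] (f : X → X) (U : Set (Set X)) :
    hLplus f U = 0 := by
  rw [hLplus_def]
  have : (fun n : ℕ => ((hTerm f U n : ℝ) : EReal)) = fun _ => (0 : EReal) := by
    funext n; rw [hTerm_eq_zero_of_isEmpty]; simp
  rw [this, limsup_const]

lemma hLminus_eq_zero_of_isEmpty [IsEmpty X] (f : X → X) (U : Set (Set X)) :
    hLminus f U = 0 := by
  rw [hLminus_def]
  have : (fun n : ℕ => ((hTerm f U n : ℝ) : EReal)) = fun _ => (0 : EReal) := by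
    funext n; rw [hTerm_eq_zero_of_isEmpty]; simp
  rw [this, liminf_const]

lemma lebN_one_top_imp [CompactSpace X] {f : X → X} {U : Set (Set X)} {n : ℕ}
    (h : lebN f U 1 = ⊤) : lebN f U n = ⊤ := by
  cases isEmpty_or_nonempty X with
  | inl hX => exact leb_eq_top_of_isEmpty _
  | inr hX =>
    have h1 : univ ∈ covSeq f U 1 := univ_mem_of_leb_eq_top h
    have h2 : univ ∈ U := univ_mem_of_univ_mem_covSeq le_rfl h1
    exact leb_eq_top_of_univ_mem (univ_mem_covSeq h2 n)

lemma log_lebN_le [CompactSpace X] {f : X → X} (hf : Continuous f) {U : Set (Set X)}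
    (hU : IsOpenCover U) {n : ℕ} (hn : 1 ≤ n) :
    Real.log ((lebN f U n).toReal) ≤ max 0 (Real.log ((lebN f U 1).toReal)) := by
  by_cases h1 : lebN f U 1 = ⊤
  · rw [lebN_one_top_imp h1]
    simp
  · have hle : lebN f U n ≤ lebN f U 1 := leb_mono (covSeq_refines_one hn)
    have hpos : 0 < lebN f U n := leb_pos (covSeq_isOpenCover hf hU n)
    have hne : lebN f U n ≠ ⊤ := ne_top_of_le_ne_top h1 hle
    have h2 : (lebN f U n).toReal ≤ (lebN f U 1).toReal := ENNReal.toReal_mono h1 hle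
    exact le_max_of_le_right (Real.log_le_log (ENNReal.toReal_pos hpos.ne' hne) h2)

lemma hTerm_lower [CompactSpace X] {f : X → X} (hf : Continuous f) {U : Set (Set X)}
    (hU : IsOpenCover U) {n : ℕ} (hn : 1 ≤ n) :
    -(max 0 (Real.log ((lebN f U 1).toReal))) / n ≤ hTerm f U n := by
  have hnpos : (0 : ℝ) < n := by exact_mod_cast hn
  exact div_le_div_of_nonneg_right (neg_le_neg (log_lebN_le hf hU hn)) hnpos.le

lemma hTerm_le [CompactSpace X] {f : X → X} (hf : Continuous f) {U V : Set (Set X)}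
    (hU : IsOpenCover U) (hR : Refines U V) {n : ℕ} (hn : 1 ≤ n) :
    hTerm f V n ≤ max (hTerm f U n) (max 0 (Real.log ((lebN f U 1).toReal)) / n) := by
  have hnpos : (0 : ℝ) < n := by exact_mod_cast hn
  by_cases hv : lebN f V n = ⊤
  · have h0 : hTerm f V n = 0 := by rw [hTerm, hv]; simp
    rw [h0]
    exact le_max_of_le_right (div_nonneg (le_max_left _ _) hnpos.le)
  · refine le_max_of_le_left ?_
    have hle : lebN f U n ≤ lebN f V n := leb_mono (covSeq_refines hR n)
    have hne : lebN f U n ≠ ⊤ := ne_top_of_le_ne_top hv hle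
    have hpos : 0 < lebN f U n := leb_pos (covSeq_isOpenCover hf hU n)
    have hlog : Real.log ((lebN f U n).toReal) ≤ Real.log ((lebN f V n).toReal) :=
      Real.log_le_log (ENNReal.toReal_pos hpos.ne' hne) (ENNReal.toReal_mono hv hle)
    exact div_le_div_of_nonneg_right (neg_le_neg hlog) hnpos.le

lemma hLminus_nonneg [CompactSpace X] {f : X → X} (hf : Continuous f) {U : Set (Set X)}
    (hU : IsOpenCover U) : (0 : EReal) ≤ hLminus f U := by
  set c : ℝ := max 0 (Real.log ((lebN f U 1).toReal)) with hc
  have h0 : Tendsto (fun n : ℕ => ((-c / n : ℝ) : EReal)) atTop (𝓝 0) := by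
    have := tendsto_const_div_atTop_nhds_zero_nat (-c)
    rw [show ((0 : EReal) = ((0 : ℝ) : EReal)) from rfl]
    exact EReal.tendsto_coe.2 this
  rw [hLminus_def, ← h0.liminf_eq]
  refine liminf_le_liminf ?_
  filter_upwards [eventually_ge_atTop 1] with n hn
  exact EReal.coe_le_coe_iff.2 (hTerm_lower hf hU hn)

lemma hLplus_nonneg [CompactSpace X] {f : X → X} (hf : Continuous f) {U : Set (Set X)}
    (hU : IsOpenCover U) : (0 : EReal) ≤ hLplus f U := by
  refine le_trans (hLminus_nonneg hf hU) ?_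
  rw [hLminus_def, hLplus_def]
  exact liminf_le_limsup

lemma hL_le_of_refines [CompactSpace X] {f : X → X} (hf : Continuous f) {U V : Set (Set X)}
    (hU : IsOpenCover U) (hV : IsOpenCover V) (hR : Refines U V) :
    hLplus f V ≤ hLplus f U ∧ hLminus f V ≤ hLminus f U := by
  set c : ℝ := max 0 (Real.log ((lebN f U 1).toReal)) with hc
  have hcn : Tendsto (fun n : ℕ => ((c / n : ℝ) : EReal)) atTop (𝓝 0) := by
    have := tendsto_const_div_atTop_nhds_zero_nat c
    rw [show ((0 : EReal) = ((0 : ℝ) : EReal)) from rfl]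
    exact EReal.tendsto_coe.2 this
  constructor
  · rw [hLplus_def, hLplus_def]
    refine le_of_forall_gt_imp_ge_of_dense fun w hw => ?_
    have hw0 : (0 : EReal) < w := lt_of_le_of_lt (by rw [← hLplus_def]; exact hLplus_nonneg hf hU) hw
    have h1 : ∀ᶠ n in atTop, ((hTerm f U n : ℝ) : EReal) < w := eventually_lt_of_limsup_lt hw
    have h2 : ∀ᶠ n : ℕ in atTop, ((c / n : ℝ) : EReal) < w := hcn.eventually_lt_const hw0
    have h3 : ∀ᶠ n : ℕ in atTop, ((hTerm f V n : ℝ) : EReal) ≤ w := by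
      filter_upwards [h1, h2, eventually_ge_atTop 1] with n h1 h2 hn
      rcases le_max_iff.1 (hTerm_le hf hU hR hn) with h | h
      · exact le_of_lt (lt_of_le_of_lt (EReal.coe_le_coe_iff.2 h) h1)
      · exact le_of_lt (lt_of_le_of_lt (EReal.coe_le_coe_iff.2 h) h2)
    exact limsup_le_of_le (h := h3)
  · rw [hLminus_def, hLminus_def]
    refine le_of_forall_gt_imp_ge_of_dense fun w hw => ?_
    have hw0 : (0 : EReal) < w :=
      lt_of_le_of_lt (by rw [← hLminus_def]; exact hLminus_nonneg hf hU) hw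
    have h1 : ∃ᶠ n in atTop, ((hTerm f U n : ℝ) : EReal) < w := frequently_lt_of_liminf_lt (h := hw)
    have h2 : ∀ᶠ n : ℕ in atTop, ((c / n : ℝ) : EReal) < w := hcn.eventually_lt_const hw0
    have h3 : ∃ᶠ n : ℕ in atTop, ((hTerm f V n : ℝ) : EReal) ≤ w := by
      refine (h1.and_eventually (h2.and (eventually_ge_atTop 1))).mono ?_
      rintro n ⟨h1, h2, hn⟩
      rcases le_max_iff.1 (hTerm_le hf hU hR hn) with h | h
      · exact le_of_lt (lt_of_le_of_lt (EReal.coe_le_coe_iff.2 h) h1)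
      · exact le_of_lt (lt_of_le_of_lt (EReal.coe_le_coe_iff.2 h) h2)
    exact liminf_le_of_frequently_le' h3

lemma refines_of_small [Nonempty X] {U V : Set (Set X)} (h : covDiam U < leb V) :
    Refines U V := by
  obtain ⟨δ, hδV, hδ⟩ := lt_sSup_iff.1 h
  intro A hA
  rcases A.eq_empty_or_nonempty with rfl | ⟨a, ha⟩
  · obtain ⟨B, hB, -⟩ := hδV (Classical.arbitrary X)
    exact ⟨B, hB, empty_subset B⟩
  · obtain ⟨B, hB, hb⟩ := hδV a
    refine ⟨B, hB, fun y hy => hb ?_⟩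
    refine EMetric.mem_ball.2 (lt_of_le_of_lt (le_trans (EMetric.edist_le_diam_of_mem hy ha) ?_) hδ)
    exact le_iSup₂ (f := fun A (_ : A ∈ U) => EMetric.diam A) A hA

lemma exists_small_cover [CompactSpace X] {ε : ℝ} (hε : 0 < ε) :
    ∃ U : Set (Set X), IsOpenCover U ∧ U.Finite ∧ covDiam U < ENNReal.ofReal ε := by
  have htb := (isCompact_univ (X := X)).totallyBounded
  set r : ℝ≥0∞ := ENNReal.ofReal (ε / 3) with hr
  have hr0 : 0 < r := ENNReal.ofReal_pos.2 (by linarith)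
  obtain ⟨t, htf, hcov⟩ := EMetric.totallyBounded_iff.1 htb r hr0
  refine ⟨(fun x => EMetric.ball x r) '' t, ⟨?_, ?_⟩, htf.image _, ?_⟩
  · rintro A ⟨x, -, rfl⟩; exact EMetric.isOpen_ball
  · rw [sUnion_image]
    exact univ_subset_iff.1 hcov
  · have hb : covDiam ((fun x => EMetric.ball x r) '' t) ≤ 2 * r := by
      refine iSup₂_le ?_
      rintro A ⟨x, -, rfl⟩
      exact EMetric.diam_ball
    refine lt_of_le_of_lt hb ?_
    rw [hr, show ((2 : ℝ≥0∞) = ENNReal.ofReal 2) from by norm_num,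
        ← ENNReal.ofReal_mul (by norm_num)]
    exact ENNReal.ofReal_lt_ofReal_iff hε |>.2 (by linarith)

lemma hkey [CompactSpace X] {f : X → X} (hf : Continuous f) {U V : Set (Set X)}
    (hU : IsOpenCover U) (hV : IsOpenCover V) (hlt : covDiam U < leb V) :
    hLplus f V ≤ hLplus f U ∧ hLminus f V ≤ hLminus f U := by
  cases isEmpty_or_nonempty X with
  | inl hX =>
    rw [hLplus_eq_zero_of_isEmpty, hLplus_eq_zero_of_isEmpty,
      hLminus_eq_zero_of_isEmpty, hLminus_eq_zero_of_isEmpty]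
    exact ⟨le_rfl, le_rfl⟩
  | inr hX => exact hL_le_of_refines hf hU hV (refines_of_small hlt)

lemma tendsto_sInf_covers [CompactSpace X] (ent : Set (Set X) → EReal)
    (hkey' : ∀ U V : Set (Set X), IsOpenCover U → IsOpenCover V →
      covDiam U < leb V → ent V ≤ ent U) :
    Filter.Tendsto
      (fun ε : ℝ => sInf {x : EReal | ∃ U : Set (Set X),
        IsOpenCover U ∧ U.Finite ∧ covDiam U < ENNReal.ofReal ε ∧ x = ent U})
      (nhdsWithin (0:ℝ) (Set.Ioi 0))
      (nhds (⨆ (U : Set (Set X)) (_ : IsOpenCover U ∧ U.Finite), ent U)) := by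
  rw [tendsto_order]
  constructor
  · intro l hl
    obtain ⟨V, hV, hlV⟩ : ∃ V, (IsOpenCover V ∧ V.Finite) ∧ l < ent V := by
      rw [lt_iSup_iff] at hl
      obtain ⟨V, hV⟩ := hl
      rw [lt_iSup_iff] at hV
      obtain ⟨hPV, h⟩ := hV
      exact ⟨V, hPV, h⟩
    obtain ⟨r, hr0, hrleb⟩ : ∃ r : ℝ, 0 < r ∧ ENNReal.ofReal r ≤ leb V := by
      rcases eq_top_or_lt_top (leb V) with htop | hltop
      · exact ⟨1, one_pos, by rw [htop]; exact le_top⟩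
      · refine ⟨(leb V).toReal, ENNReal.toReal_pos (leb_pos hV.1).ne' hltop.ne, ?_⟩
        rw [ENNReal.ofReal_toReal hltop.ne]
    filter_upwards [Ioc_mem_nhdsGT_of_mem ⟨le_refl (0:ℝ), hr0⟩] with ε hε
    refine lt_of_lt_of_le hlV (le_sInf ?_)
    rintro x ⟨U, hU, hUf, hUd, rfl⟩
    exact hkey' U V hU hV.1
      (lt_of_lt_of_le hUd (le_trans (ENNReal.ofReal_le_ofReal hε.2) hrleb))
  · intro u hu
    filter_upwards [self_mem_nhdsWithin] with ε hε
    obtain ⟨U, hU, hUf, hUd⟩ := exists_small_cover (X := X) hε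
    refine lt_of_le_of_lt (le_trans (sInf_le ⟨U, hU, hUf, hUd, rfl⟩) ?_) hu
    exact le_iSup₂ (f := fun U (_ : IsOpenCover U ∧ U.Finite) => ent U) U ⟨hU, hUf⟩

end Aux

/-- `h_L^±(f) = lim_{ε→0} inf {h_L^±(f,U) : U finite open cover, diam U < ε}`. -/
theorem hL_eq_lim_inf_small_covers {X : Type*} [MetricSpace X] [CompactSpace X]
    (f : X → X) (hf : Continuous f) :
    Filter.Tendsto
      (fun ε : ℝ => sInf {h : EReal | ∃ U : Set (Set X),
        IsOpenCover U ∧ U.Finite ∧ covDiam U < ENNReal.ofReal ε ∧ h = hLplus f U})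
      (nhdsWithin (0:ℝ) (Set.Ioi 0)) (nhds (hLplusSup f)) ∧
    Filter.Tendsto
      (fun ε : ℝ => sInf {h : EReal | ∃ U : Set (Set X),
        IsOpenCover U ∧ U.Finite ∧ covDiam U < ENNReal.ofReal ε ∧ h = hLminus f U})
      (nhdsWithin (0:ℝ) (Set.Ioi 0)) (nhds (hLminusSup f)) := by
  constructor
  · exact tendsto_sInf_covers (hLplus f) fun U V hU hV hlt => (hkey hf hU hV hlt).1
  · exact tendsto_sInf_covers (hLminus f) fun U V hU hV hlt => (hkey hf hU hV hlt).2
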